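/- Let G : ℝ → [0,∞) and λ > 0, and suppose that for every j ∈ ℤ one has the distributional inequality |{x : |F(x)| ≥ 2^j}| ≤ 2^{-2j} N ‖min(G, N^{-1/2} 2^j)‖_{L²}² for a measurable function F and constant N ≥ 1. Then ‖F‖_{L^{1,2}} ≲ N^{1/2} ‖G‖_{L^{1,2}}. -/

import Mathlib

open MeasureTheory Set
open scoped ENNReal NNReal

/-- Distribution function `t ↦ |{x : |f(x)| > t}|`. -/
noncomputable def distFn (f : ℝ → ℝ) (t : ℝ) : ℝ≥0∞ := volume {x : ℝ | t < |f x|}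

/-- The Lorentz `L^{1,2}` (quasi)norm, via the distribution function. -/
noncomputable def L12Norm (f : ℝ → ℝ) : ℝ≥0∞ :=
  (∫⁻ t in Set.Ioi (0 : ℝ),
      (ENNReal.ofReal t * distFn f t) ^ 2 * ENNReal.ofReal t⁻¹) ^ (1 / 2 : ℝ)


-- ENNReal dyadic power helper
lemma ofReal_two_zpow (j : ℤ) : ENNReal.ofReal ((2:ℝ)^j) = (2:ℝ≥0∞)^j := by
  obtain ⟨n, rfl | rfl⟩ := j.eq_nat_or_neg
  · rw [zpow_natCast, zpow_natCast, ENNReal.ofReal_pow (by norm_num)]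
    norm_num
  · rw [zpow_neg, ENNReal.zpow_neg, zpow_natCast, zpow_natCast,
      ENNReal.ofReal_inv_of_pos (by positivity), ENNReal.ofReal_pow (by norm_num)]
    norm_num

lemma two_zpow_add (i j : ℤ) : (2:ℝ≥0∞)^(i+j) = 2^i * 2^j :=
  ENNReal.zpow_add (by norm_num) (by norm_num) i j

-- Cauchy-Schwarz-like inequality for ENNReal tsums
lemma cs_ennreal (a b : ℕ → ℝ≥0∞) :
    (∑' n, a n * b n)^2 ≤ 2 * (∑' n, a n) * ∑' n, a n * (b n)^2 := by
  have hb : ∀ n k, b n * b k ≤ b n ^ 2 + b k ^ 2 := by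
    intro n k
    rcases le_total (b n) (b k) with h | h
    · calc b n * b k ≤ b k * b k := mul_le_mul_left h _
        _ = b k ^ 2 := (sq _).symm
        _ ≤ _ := le_add_self
    · calc b n * b k ≤ b n * b n := mul_le_mul_right h _
        _ = b n ^ 2 := (sq _).symm
        _ ≤ _ := le_self_add
  calc (∑' n, a n * b n)^2 = ∑' n, (a n * b n) * ∑' k, (a k * b k) := by
        rw [sq, ENNReal.tsum_mul_right]
    _ = ∑' n, ∑' k, (a n * b n) * (a k * b k) := by
        congr 1; ext n; rw [ENNReal.tsum_mul_left]
    _ ≤ ∑' n, ∑' k, (a n * a k) * (b n ^2 + b k ^2) := by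
        refine ENNReal.tsum_le_tsum fun n => ENNReal.tsum_le_tsum fun k => ?_
        rw [mul_mul_mul_comm]
        exact mul_le_mul_right (hb n k) _
    _ = (∑' n, ∑' k, (a n * a k) * b n ^2) + ∑' n, ∑' k, (a n * a k) * b k ^2 := by
        simp_rw [mul_add, ENNReal.tsum_add]
    _ = 2 * (∑' n, a n) * ∑' n, a n * (b n)^2 := by
        have h1 : (∑' n, ∑' k, (a n * a k) * b n ^2) = (∑' n, a n) * ∑' n, a n * (b n)^2 := by
          calc ∑' n, ∑' k, (a n * a k) * b n ^2 = ∑' n, (a n * b n ^2) * ∑' k, a k := by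
                congr 1; ext n
                rw [← ENNReal.tsum_mul_left]
                congr 1; ext k; ring
            _ = (∑' n, a n) * ∑' n, a n * (b n)^2 := by
                rw [ENNReal.tsum_mul_right]; ring
        have h2 : (∑' n, ∑' k, (a n * a k) * b k ^2) = (∑' n, a n) * ∑' n, a n * (b n)^2 := by
          calc ∑' n, ∑' k, (a n * a k) * b k ^2 = ∑' n, a n * ∑' k, a k * b k ^2 := by
                congr 1; ext n
                rw [← ENNReal.tsum_mul_left]
                congr 1; ext k; ring
            _ = _ := ENNReal.tsum_mul_right
        rw [h1, h2]; ring

-- geometric sum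
lemma geom_two : (∑' n : ℕ, (2:ℝ≥0∞)^(-(n:ℤ))) = 2 := by
  have : ∀ n : ℕ, (2:ℝ≥0∞)^(-(n:ℤ)) = (2⁻¹)^n := by
    intro n
    rw [ENNReal.zpow_neg, zpow_natCast, ← ENNReal.inv_pow]
  simp_rw [this, ENNReal.tsum_geometric, ENNReal.one_sub_inv_two, inv_inv]

lemma distFn_antitone (f : ℝ → ℝ) : Antitone (distFn f) :=
  fun _ _ hst => measure_mono (fun _ hx => lt_of_le_of_lt hst hx)

lemma integrand_measurable (f : ℝ → ℝ) :
    Measurable fun t : ℝ => (ENNReal.ofReal t * distFn f t)^2 * ENNReal.ofReal t⁻¹ := by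
  have h1 : Measurable (distFn f) := (distFn_antitone f).measurable
  exact (((ENNReal.measurable_ofReal.comp measurable_id).mul h1).pow_const 2).mul
    (ENNReal.measurable_ofReal.comp measurable_inv)

lemma step_F (F : ℝ → ℝ) :
    (∫⁻ t in Set.Ioi (0:ℝ), (ENNReal.ofReal t * distFn F t)^2 * ENNReal.ofReal t⁻¹) ≤
      4 * ∑' j : ℤ, ((2:ℝ≥0∞)^j * volume {x : ℝ | (2:ℝ)^j ≤ |F x|})^2 := by
  set a : ℤ → ℝ≥0∞ := fun j => volume {x : ℝ | (2:ℝ)^j ≤ |F x|} with ha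
  have cover : Set.Ioi (0:ℝ) ⊆ ⋃ j : ℤ, Set.Ico ((2:ℝ)^j) (2^(j+1)) := by
    intro t ht
    refine Set.mem_iUnion.2 ⟨Int.log 2 t, ?_, ?_⟩
    · exact_mod_cast Int.zpow_log_le_self (R := ℝ) (by norm_num : 1 < 2) ht
    · exact_mod_cast Int.lt_zpow_succ_log_self (by norm_num : 1 < 2) t
  calc (∫⁻ t in Set.Ioi (0:ℝ), (ENNReal.ofReal t * distFn F t)^2 * ENNReal.ofReal t⁻¹)
      ≤ ∫⁻ t in ⋃ j : ℤ, Set.Ico ((2:ℝ)^j) (2^(j+1)),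
          (ENNReal.ofReal t * distFn F t)^2 * ENNReal.ofReal t⁻¹ :=
        lintegral_mono_set cover
    _ ≤ ∑' j : ℤ, ∫⁻ t in Set.Ico ((2:ℝ)^j) (2^(j+1)),
          (ENNReal.ofReal t * distFn F t)^2 * ENNReal.ofReal t⁻¹ :=
        lintegral_iUnion_le _ _
    _ ≤ ∑' j : ℤ, 4 * ((2:ℝ≥0∞)^j * a j)^2 := by
        refine ENNReal.tsum_le_tsum fun j => ?_
        have hptwise : ∀ t ∈ Set.Ico ((2:ℝ)^j) (2^(j+1)),
            (ENNReal.ofReal t * distFn F t)^2 * ENNReal.ofReal t⁻¹ ≤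
              ((2:ℝ≥0∞)^(j+1) * a j)^2 * (2:ℝ≥0∞)^(-j) := by
          intro t ht
          have h1 : ENNReal.ofReal t ≤ (2:ℝ≥0∞)^(j+1) := by
            rw [← ofReal_two_zpow]; exact ENNReal.ofReal_le_ofReal ht.2.le
          have h2 : distFn F t ≤ a j := by
            refine measure_mono fun x hx => ?_
            exact le_trans ht.1 (le_of_lt hx)
          have h3 : ENNReal.ofReal t⁻¹ ≤ (2:ℝ≥0∞)^(-j) := by
            rw [← ofReal_two_zpow]
            refine ENNReal.ofReal_le_ofReal ?_
            rw [zpow_neg]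
            exact inv_anti₀ (by positivity) ht.1
          gcongr
        calc (∫⁻ t in Set.Ico ((2:ℝ)^j) (2^(j+1)),
              (ENNReal.ofReal t * distFn F t)^2 * ENNReal.ofReal t⁻¹)
            ≤ ∫⁻ _ in Set.Ico ((2:ℝ)^j) (2^(j+1)),
              ((2:ℝ≥0∞)^(j+1) * a j)^2 * (2:ℝ≥0∞)^(-j) :=
              setLIntegral_mono measurable_const hptwise
          _ = ((2:ℝ≥0∞)^(j+1) * a j)^2 * (2:ℝ≥0∞)^(-j) *
                volume (Set.Ico ((2:ℝ)^j) (2^(j+1))) := setLIntegral_const _ _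
          _ = 4 * ((2:ℝ≥0∞)^j * a j)^2 := by
              rw [Real.volume_Ico]
              have hv : (2:ℝ)^(j+1) - 2^j = 2^j := by
                rw [zpow_add₀ (by norm_num : (2:ℝ) ≠ 0)]; ring
              rw [hv, ofReal_two_zpow]
              have e1 : (2:ℝ≥0∞)^(j+1) = 2^j * 2 := by
                rw [two_zpow_add]; norm_num
              have e2 : (2:ℝ≥0∞)^(-j) * 2^j = 1 := by
                rw [← two_zpow_add]; simp
              calc ((2:ℝ≥0∞)^(j+1) * a j)^2 * (2:ℝ≥0∞)^(-j) * (2:ℝ≥0∞)^j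
                  = ((2:ℝ≥0∞)^j * a j)^2 * (2*2) * ((2:ℝ≥0∞)^(-j) * 2^j) := by
                    rw [e1]; ring
                _ = 4 * ((2:ℝ≥0∞)^j * a j)^2 := by rw [e2]; norm_num; ring
    _ = 4 * ∑' j : ℤ, ((2:ℝ≥0∞)^j * a j)^2 := ENNReal.tsum_mul_left

lemma step_G (G : ℝ → ℝ) (hG0 : ∀ x, 0 ≤ G x) :
    ∑' k : ℤ, ((2:ℝ≥0∞)^k * volume {x : ℝ | (2:ℝ)^k ≤ G x})^2 ≤
      8 * ∫⁻ t in Set.Ioi (0:ℝ), (ENNReal.ofReal t * distFn G t)^2 * ENNReal.ofReal t⁻¹ := by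
  set d : ℤ → ℝ≥0∞ := fun k => volume {x : ℝ | (2:ℝ)^k ≤ G x} with hd
  have hdisj : Pairwise (Function.onFun Disjoint
      (fun k : ℤ => Set.Ico ((2:ℝ)^(k-1)) (2^k))) := by
    intro k l hkl
    have key : ∀ k l : ℤ, k < l →
        Disjoint (Set.Ico ((2:ℝ)^(k-1)) (2^k)) (Set.Ico ((2:ℝ)^(l-1)) (2^l)) := by
      intro k l hlt
      rw [Set.disjoint_left]
      intro x hx1 hx2
      have h1 : (2:ℝ)^k ≤ 2^(l-1) :=
        zpow_le_zpow_right₀ (by norm_num) (by omega)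
      linarith [hx1.2, hx2.1]
    rcases lt_or_gt_of_ne hkl with h | h
    · exact key k l h
    · exact (key l k h).symm
  have hsub : (⋃ k : ℤ, Set.Ico ((2:ℝ)^(k-1)) (2^k)) ⊆ Set.Ioi (0:ℝ) := by
    intro t ht
    obtain ⟨k, hk⟩ := Set.mem_iUnion.1 ht
    exact lt_of_lt_of_le (by positivity) hk.1
  have hperk : ∀ k : ℤ, ((2:ℝ≥0∞)^k * d k)^2 ≤
      8 * ∫⁻ t in Set.Ico ((2:ℝ)^(k-1)) (2^k),
        (ENNReal.ofReal t * distFn G t)^2 * ENNReal.ofReal t⁻¹ := by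
    intro k
    have hptwise : ∀ t ∈ Set.Ico ((2:ℝ)^(k-1)) (2^k),
        ((2:ℝ≥0∞)^(k-1) * d k)^2 * (2:ℝ≥0∞)^(-k) ≤
          (ENNReal.ofReal t * distFn G t)^2 * ENNReal.ofReal t⁻¹ := by
      intro t ht
      have h1 : (2:ℝ≥0∞)^(k-1) ≤ ENNReal.ofReal t := by
        rw [← ofReal_two_zpow]; exact ENNReal.ofReal_le_ofReal ht.1
      have h2 : d k ≤ distFn G t := by
        refine measure_mono fun x hx => ?_
        have : t < G x := lt_of_lt_of_le ht.2 hx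
        simpa [abs_of_nonneg (hG0 x)] using this
      have h3 : (2:ℝ≥0∞)^(-k) ≤ ENNReal.ofReal t⁻¹ := by
        rw [← ofReal_two_zpow]
        refine ENNReal.ofReal_le_ofReal ?_
        rw [zpow_neg]
        exact inv_anti₀ (lt_of_lt_of_le (by positivity) ht.1) ht.2.le
      gcongr
    calc ((2:ℝ≥0∞)^k * d k)^2
        = 8 * (((2:ℝ≥0∞)^(k-1) * d k)^2 * (2:ℝ≥0∞)^(-k) *
            volume (Set.Ico ((2:ℝ)^(k-1)) (2^k))) := by
          rw [Real.volume_Ico]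
          have hv : (2:ℝ)^k - 2^(k-1) = 2^(k-1) := by
            have h : (2:ℝ)^k = 2^(k-1) * 2 := by
              have h2 := zpow_add₀ (by norm_num : (2:ℝ) ≠ 0) (k-1) 1
              rw [zpow_one] at h2
              rw [← h2]; congr 1; ring
            rw [h]; ring
          rw [hv, ofReal_two_zpow]
          have e1 : (2:ℝ≥0∞)^(k-1) * 2 = 2^k := by
            have h := two_zpow_add (k-1) 1
            rw [zpow_one] at h
            rw [← h]
            congr 1
            ring
          have e2 : (2:ℝ≥0∞)^(-k) * 2^(k-1) = 2⁻¹ := by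
            rw [← two_zpow_add]
            have h : -k + (k-1) = -1 := by ring
            rw [h, ENNReal.zpow_neg, zpow_one]
          have h82 : (8:ℝ≥0∞) * 2⁻¹ = 2*2 := by
            have h2 : (2:ℝ≥0∞) * 2⁻¹ = 1 :=
              ENNReal.mul_inv_cancel (by norm_num) (by norm_num)
            calc (8:ℝ≥0∞) * 2⁻¹ = 2*2*(2*2⁻¹) := by
                  rw [show (8:ℝ≥0∞) = 2*2*2 by norm_num]; ring
              _ = 2*2 := by rw [h2, mul_one]
          calc ((2:ℝ≥0∞)^k * d k)^2
              = ((2:ℝ≥0∞)^(k-1) * d k)^2 * (2*2) := by rw [← e1]; ring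
            _ = ((2:ℝ≥0∞)^(k-1) * d k)^2 * (8 * 2⁻¹) := by rw [h82]
            _ = 8 * (((2:ℝ≥0∞)^(k-1) * d k)^2 * ((2:ℝ≥0∞)^(-k) * 2^(k-1))) := by
                rw [e2]; ring
            _ = 8 * (((2:ℝ≥0∞)^(k-1) * d k)^2 * (2:ℝ≥0∞)^(-k) * 2^(k-1)) := by ring
      _ ≤ _ := by
          gcongr
          calc ((2:ℝ≥0∞)^(k-1) * d k)^2 * (2:ℝ≥0∞)^(-k) *
                volume (Set.Ico ((2:ℝ)^(k-1)) (2^k))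
              = ∫⁻ _ in Set.Ico ((2:ℝ)^(k-1)) (2^k),
                  ((2:ℝ≥0∞)^(k-1) * d k)^2 * (2:ℝ≥0∞)^(-k) := (setLIntegral_const _ _).symm
            _ ≤ _ := setLIntegral_mono (integrand_measurable G) hptwise
  calc ∑' k : ℤ, ((2:ℝ≥0∞)^k * d k)^2
      ≤ ∑' k : ℤ, 8 * ∫⁻ t in Set.Ico ((2:ℝ)^(k-1)) (2^k),
          (ENNReal.ofReal t * distFn G t)^2 * ENNReal.ofReal t⁻¹ :=
        ENNReal.tsum_le_tsum hperk
    _ = 8 * ∑' k : ℤ, ∫⁻ t in Set.Ico ((2:ℝ)^(k-1)) (2^k),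
          (ENNReal.ofReal t * distFn G t)^2 * ENNReal.ofReal t⁻¹ := ENNReal.tsum_mul_left
    _ = 8 * ∫⁻ t in ⋃ k : ℤ, Set.Ico ((2:ℝ)^(k-1)) (2^k),
          (ENNReal.ofReal t * distFn G t)^2 * ENNReal.ofReal t⁻¹ := by
        rw [lintegral_iUnion (fun k => measurableSet_Ico) hdisj]
    _ ≤ _ := by gcongr

lemma step_B (G : ℝ → ℝ) (hGm : Measurable G) (hG0 : ∀ x, 0 ≤ G x)
    (M : ℝ) (hM0 : 0 < M) (K : ℤ) (hMK : M ≤ 2^(K+1)) :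
    (∫⁻ x, ENNReal.ofReal ((min (G x) M)^2)) ≤
      4 * ∑' n : ℕ, (2:ℝ≥0∞)^(2*(K-(n:ℤ))) *
        volume {x : ℝ | (2:ℝ)^(K-(n:ℤ)) ≤ G x} := by
  set f : ℕ → ℝ → ℝ≥0∞ := fun n x =>
    (4 * (2:ℝ≥0∞)^(2*(K-(n:ℤ)))) *
      ({y : ℝ | (2:ℝ)^(K-(n:ℤ)) ≤ G y}).indicator (fun _ => 1) x with hf
  have hmeas : ∀ n : ℕ, MeasurableSet {y : ℝ | (2:ℝ)^(K-(n:ℤ)) ≤ G y} :=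
    fun n => hGm measurableSet_Ici
  have hpt : ∀ x, ENNReal.ofReal ((min (G x) M)^2) ≤ ∑' n : ℕ, f n x := by
    intro x
    rcases eq_or_lt_of_le (hG0 x) with h0 | hg
    · have : min (G x) M = 0 := by rw [← h0]; exact min_eq_left hM0.le
      simp [this]
    · set p : ℤ := min K (Int.log 2 (G x)) with hp
      have hpK : p ≤ K := min_le_left _ _
      set n : ℕ := (K - p).toNat with hn
      have hKn : K - (n:ℤ) = p := by
        rw [hn, Int.toNat_of_nonneg (by omega)]; ring
      have h2p : (2:ℝ)^p ≤ G x := by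
        calc (2:ℝ)^p ≤ 2^(Int.log 2 (G x)) :=
              zpow_le_zpow_right₀ (by norm_num) (min_le_right _ _)
          _ ≤ G x := by exact_mod_cast Int.zpow_log_le_self (by norm_num : 1 < 2) hg
      have hmin : min (G x) M ≤ 2^(p+1) := by
        rcases le_total K (Int.log 2 (G x)) with h | h
        · have hpe : p = K := min_eq_left h
          calc min (G x) M ≤ M := min_le_right _ _
            _ ≤ 2^(K+1) := hMK
            _ = 2^(p+1) := by rw [hpe]
        · have hpe : p = Int.log 2 (G x) := min_eq_right h
          have hlt : min (G x) M < 2^(p+1) :=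
            calc min (G x) M ≤ G x := min_le_left _ _
              _ < 2^(Int.log 2 (G x) + 1) := by
                  exact_mod_cast Int.lt_zpow_succ_log_self (by norm_num : 1 < 2) (G x)
              _ = 2^(p+1) := by rw [hpe]
          exact hlt.le
      have hminnn : 0 ≤ min (G x) M := le_min (hG0 x) hM0.le
      have key : ENNReal.ofReal ((min (G x) M)^2) ≤ f n x := by
        have hind : ({y : ℝ | (2:ℝ)^(K-(n:ℤ)) ≤ G y}).indicator
            (fun _ => (1:ℝ≥0∞)) x = 1 := by
          rw [Set.indicator_of_mem]
          rw [Set.mem_setOf_eq, hKn]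
          exact h2p
        rw [hf]
        simp only [hind, mul_one]
        calc ENNReal.ofReal ((min (G x) M)^2)
            ≤ ENNReal.ofReal (((2:ℝ)^(p+1))^2) := by
              apply ENNReal.ofReal_le_ofReal
              exact pow_le_pow_left₀ hminnn hmin 2
          _ = ((2:ℝ≥0∞)^(p+1))^2 := by
              rw [ENNReal.ofReal_pow (by positivity), ofReal_two_zpow]
          _ = 4 * (2:ℝ≥0∞)^(2*(K-(n:ℤ))) := by
              rw [hKn, sq, ← two_zpow_add]
              rw [show (4:ℝ≥0∞) = 2^(2:ℤ) by
                rw [show (2:ℤ) = 1+1 by norm_num, two_zpow_add, zpow_one]; norm_num]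
              rw [← two_zpow_add]
              congr 1
              ring
      exact le_trans key (ENNReal.le_tsum n)
  calc (∫⁻ x, ENNReal.ofReal ((min (G x) M)^2))
      ≤ ∫⁻ x, ∑' n : ℕ, f n x := lintegral_mono hpt
    _ = ∑' n : ℕ, ∫⁻ x, f n x := by
        refine lintegral_tsum fun n => ?_
        exact ((measurable_const.indicator (hmeas n)).const_mul _).aemeasurable
    _ = ∑' n : ℕ, 4 * ((2:ℝ≥0∞)^(2*(K-(n:ℤ))) *
          volume {x : ℝ | (2:ℝ)^(K-(n:ℤ)) ≤ G x}) := by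
        congr 1; ext n
        rw [hf]
        simp only []
        rw [lintegral_const_mul _ (measurable_const.indicator (hmeas n))]
        rw [lintegral_indicator_const (hmeas n)]
        ring
    _ = 4 * ∑' n : ℕ, (2:ℝ≥0∞)^(2*(K-(n:ℤ))) *
          volume {x : ℝ | (2:ℝ)^(K-(n:ℤ)) ≤ G x} := ENNReal.tsum_mul_left


/-- If `F` satisfies `|{|F| ≥ 2^j}| ≤ 2^{-2j} N ‖min(G, N^{-1/2} 2^j)‖₂²` for all `j ∈ ℤ`, then
`‖F‖_{L^{1,2}} ≲ N^{1/2} ‖G‖_{L^{1,2}}` with an absolute constant. -/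
theorem stmt_19 :
    ∃ C : ℝ≥0, 0 < C ∧
      ∀ (N : ℝ), 1 ≤ N →
      ∀ (F : ℝ → ℝ), Measurable F →
      ∀ (G : ℝ → ℝ), Measurable G → (∀ x, 0 ≤ G x) →
        (∀ j : ℤ, volume {x : ℝ | (2 : ℝ) ^ j ≤ |F x|} ≤
            ENNReal.ofReal ((2 : ℝ) ^ (-(2 * j)) * N) *
              ∫⁻ x, ENNReal.ofReal
                ((min (G x) (N ^ (-(1 / 2) : ℝ) * (2 : ℝ) ^ j)) ^ 2)) →
        L12Norm F ≤ C * ENNReal.ofReal (N ^ ((1 / 2) : ℝ)) * L12Norm G := by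
  refine ⟨64, by norm_num, ?_⟩
  intro N hN F hFm G hGm hG0 hyp
  have hN0 : (0:ℝ) < N := lt_of_lt_of_le one_pos hN
  set N' : ℝ≥0∞ := ENNReal.ofReal N with hN'
  have hr0 : 0 < N ^ ((1/2 : ℝ)) := Real.rpow_pos_of_pos hN0 _
  have hrsq : (N ^ ((1/2 : ℝ))) ^ (2:ℕ) = N := by
    rw [← Real.rpow_natCast (N ^ ((1/2):ℝ)) 2, ← Real.rpow_mul hN0.le]
    norm_num
  set m : ℤ := Int.log 2 (N ^ ((1/2 : ℝ))) with hm
  have h2m : (2:ℝ)^m ≤ N ^ ((1/2 : ℝ)) := by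
    exact_mod_cast Int.zpow_log_le_self (by norm_num : 1 < 2) hr0
  have hrm : N ^ ((1/2 : ℝ)) < 2^(m+1) := by
    exact_mod_cast Int.lt_zpow_succ_log_self (by norm_num : 1 < 2) (N ^ ((1/2 : ℝ)))
  -- basic objects
  set a : ℤ → ℝ≥0∞ := fun j => volume {x : ℝ | (2:ℝ)^j ≤ |F x|} with haa
  set d : ℤ → ℝ≥0∞ := fun k => volume {x : ℝ | (2:ℝ)^k ≤ G x} with hdd
  set u : ℤ → ℝ≥0∞ := fun k => (2:ℝ≥0∞)^k * d k with huu
  set W : ℝ≥0∞ := ∑' k : ℤ, (u k)^2 with hWW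
  set S : ℝ≥0∞ := ∑' j : ℤ, ((2:ℝ≥0∞)^j * a j)^2 with hSS
  set Q : ℝ≥0∞ := (2:ℝ≥0∞)^(-(m+1)) with hQQ
  -- Step 2 : per-j bound
  have step2 : ∀ j : ℤ, (2:ℝ≥0∞)^j * a j ≤
      4 * N' * Q * ∑' n : ℕ, (2:ℝ≥0∞)^(-(n:ℤ)) * u (j - m - 1 - n) := by
    intro j
    have hM0 : (0:ℝ) < N ^ (-(1/2) : ℝ) * (2:ℝ)^j := by
      have h := Real.rpow_pos_of_pos hN0 (-(1/2):ℝ)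
      positivity
    have hMle : N ^ (-(1/2) : ℝ) * (2:ℝ)^j ≤ (2:ℝ)^((j - m - 1) + 1) := by
      have hinv : N ^ (-(1/2) : ℝ) = (N ^ ((1/2 : ℝ)))⁻¹ := by
        rw [← Real.rpow_neg hN0.le]
      have h1 : (N ^ ((1/2 : ℝ)))⁻¹ ≤ ((2:ℝ)^m)⁻¹ := inv_anti₀ (by positivity) h2m
      have h2 : ((2:ℝ)^m)⁻¹ * (2:ℝ)^j = (2:ℝ)^(j - m) := by
        rw [← zpow_neg, ← zpow_add₀ (by norm_num : (2:ℝ) ≠ 0)]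
        congr 1; ring
      calc N ^ (-(1/2) : ℝ) * (2:ℝ)^j ≤ ((2:ℝ)^m)⁻¹ * (2:ℝ)^j := by
            rw [hinv]; exact mul_le_mul_of_nonneg_right h1 (by positivity)
        _ = (2:ℝ)^(j - m) := h2
        _ = (2:ℝ)^((j - m - 1) + 1) := by congr 1; ring
    have hB := step_B G hGm hG0 _ hM0 (j - m - 1) hMle
    have h1 : a j ≤ (2:ℝ≥0∞)^(-(2*j)) * N' *
        ∫⁻ x, ENNReal.ofReal ((min (G x) (N ^ (-(1/2) : ℝ) * (2:ℝ)^j))^2) := by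
      have h := hyp j
      rwa [ENNReal.ofReal_mul (by positivity), ofReal_two_zpow] at h
    have hz : (2:ℝ≥0∞)^j * (2:ℝ≥0∞)^(-(2*j)) = (2:ℝ≥0∞)^(-j) := by
      rw [← two_zpow_add]; congr 1; ring
    have hterm : ∀ n : ℕ, (2:ℝ≥0∞)^(-j) *
        ((2:ℝ≥0∞)^(2*((j-m-1)-(n:ℤ))) * volume {x : ℝ | (2:ℝ)^((j-m-1)-(n:ℤ)) ≤ G x}) =
        Q * ((2:ℝ≥0∞)^(-(n:ℤ)) * u (j - m - 1 - n)) := by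
      intro n
      rw [huu, hQQ]
      simp only []
      calc (2:ℝ≥0∞)^(-j) * ((2:ℝ≥0∞)^(2*((j-m-1)-(n:ℤ))) *
              volume {x : ℝ | (2:ℝ)^((j-m-1)-(n:ℤ)) ≤ G x})
          = ((2:ℝ≥0∞)^(-j) * (2:ℝ≥0∞)^(2*((j-m-1)-(n:ℤ)))) * d ((j-m-1)-(n:ℤ)) := by
            simp only [hdd]
            ring
        _ = (2:ℝ≥0∞)^(-j + 2*((j-m-1)-(n:ℤ))) * d ((j-m-1)-(n:ℤ)) := by
            rw [two_zpow_add]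
        _ = (2:ℝ≥0∞)^(-(m+1) + (-(n:ℤ) + ((j-m-1)-(n:ℤ)))) * d ((j-m-1)-(n:ℤ)) := by
            congr 1; ring
        _ = ((2:ℝ≥0∞)^(-(m+1)) * ((2:ℝ≥0∞)^(-(n:ℤ)) * (2:ℝ≥0∞)^((j-m-1)-(n:ℤ)))) *
              d ((j-m-1)-(n:ℤ)) := by
            rw [two_zpow_add, two_zpow_add]
        _ = (2:ℝ≥0∞)^(-(m+1)) * ((2:ℝ≥0∞)^(-(n:ℤ)) *
              ((2:ℝ≥0∞)^(j - m - 1 - (n:ℤ)) * d (j - m - 1 - (n:ℤ)))) := by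
            ring
    calc (2:ℝ≥0∞)^j * a j
        ≤ (2:ℝ≥0∞)^j * ((2:ℝ≥0∞)^(-(2*j)) * N' *
            ∫⁻ x, ENNReal.ofReal ((min (G x) (N ^ (-(1/2) : ℝ) * (2:ℝ)^j))^2)) :=
          mul_le_mul_right h1 _
      _ = (2:ℝ≥0∞)^(-j) * N' *
            ∫⁻ x, ENNReal.ofReal ((min (G x) (N ^ (-(1/2) : ℝ) * (2:ℝ)^j))^2) := by
          rw [← hz]; ring
      _ ≤ (2:ℝ≥0∞)^(-j) * N' * (4 * ∑' n : ℕ, (2:ℝ≥0∞)^(2*((j-m-1)-(n:ℤ))) *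
            volume {x : ℝ | (2:ℝ)^((j-m-1)-(n:ℤ)) ≤ G x}) := by
          gcongr
      _ = 4 * N' * ∑' n : ℕ, (2:ℝ≥0∞)^(-j) *
            ((2:ℝ≥0∞)^(2*((j-m-1)-(n:ℤ))) *
              volume {x : ℝ | (2:ℝ)^((j-m-1)-(n:ℤ)) ≤ G x}) := by
          rw [ENNReal.tsum_mul_left]
          ring
      _ = 4 * N' * ∑' n : ℕ, Q * ((2:ℝ≥0∞)^(-(n:ℤ)) * u (j - m - 1 - n)) := by
          congr 1
          exact tsum_congr hterm
      _ = 4 * N' * Q * ∑' n : ℕ, (2:ℝ≥0∞)^(-(n:ℤ)) * u (j - m - 1 - n) := by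
          rw [ENNReal.tsum_mul_left]
          ring
  -- Step 3 : summing
  have hshift : ∀ n : ℕ, (∑' j : ℤ, (u (j - m - 1 - (n:ℤ)))^2) = W := by
    intro n
    have h := (Equiv.subRight ((m + 1 + (n:ℤ)) : ℤ)).tsum_eq (fun k => (u k)^2)
    rw [hWW, ← h]
    apply tsum_congr
    intro j
    simp only [Equiv.subRight_apply]
    congr 2
    ring
  have hNQ : N' * Q^2 ≤ 1 := by
    have hNle : N ≤ (2:ℝ)^(2*m+2) := by
      have h1 : N < ((2:ℝ)^(m+1))^(2:ℕ) := by
        rw [← hrsq]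
        exact pow_lt_pow_left₀ hrm hr0.le (by norm_num)
      have h2 : ((2:ℝ)^(m+1))^(2:ℕ) = (2:ℝ)^(2*m+2) := by
        rw [sq, ← zpow_add₀ (by norm_num : (2:ℝ) ≠ 0)]
        congr 1; ring
      linarith [h1, h2.le]
    have h3 : N' ≤ (2:ℝ≥0∞)^(2*m+2) := by
      rw [hN', ← ofReal_two_zpow]
      exact ENNReal.ofReal_le_ofReal hNle
    have h4 : Q^2 = (2:ℝ≥0∞)^(-(2*m+2)) := by
      rw [hQQ, sq, ← two_zpow_add]
      congr 1; ring
    calc N' * Q^2 ≤ (2:ℝ≥0∞)^(2*m+2) * Q^2 := mul_le_mul_left h3 _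
      _ = (2:ℝ≥0∞)^(2*m+2) * (2:ℝ≥0∞)^(-(2*m+2)) := by rw [h4]
      _ = 1 := by
          rw [← two_zpow_add, show 2*m+2 + -(2*m+2) = 0 by ring, zpow_zero]
  have step3 : S ≤ 128 * N' * W := by
    have hVsq : ∀ j : ℤ, (∑' n : ℕ, (2:ℝ≥0∞)^(-(n:ℤ)) * u (j - m - 1 - n))^2 ≤
        4 * ∑' n : ℕ, (2:ℝ≥0∞)^(-(n:ℤ)) * (u (j - m - 1 - n))^2 := by
      intro j
      calc (∑' n : ℕ, (2:ℝ≥0∞)^(-(n:ℤ)) * u (j - m - 1 - n))^2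
          ≤ 2 * (∑' n : ℕ, (2:ℝ≥0∞)^(-(n:ℤ))) *
              ∑' n : ℕ, (2:ℝ≥0∞)^(-(n:ℤ)) * (u (j - m - 1 - n))^2 :=
            cs_ennreal _ _
        _ = 4 * ∑' n : ℕ, (2:ℝ≥0∞)^(-(n:ℤ)) * (u (j - m - 1 - n))^2 := by
            rw [geom_two]
            norm_num
    have hdouble : (∑' j : ℤ, ∑' n : ℕ, (2:ℝ≥0∞)^(-(n:ℤ)) * (u (j - m - 1 - n))^2) =
        2 * W := by
      rw [ENNReal.tsum_comm]
      calc (∑' n : ℕ, ∑' j : ℤ, (2:ℝ≥0∞)^(-(n:ℤ)) * (u (j - m - 1 - n))^2)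
          = ∑' n : ℕ, (2:ℝ≥0∞)^(-(n:ℤ)) * ∑' j : ℤ, (u (j - m - 1 - n))^2 := by
            apply tsum_congr; intro n
            rw [ENNReal.tsum_mul_left]
        _ = ∑' n : ℕ, (2:ℝ≥0∞)^(-(n:ℤ)) * W := by
            apply tsum_congr; intro n
            rw [hshift n]
        _ = (∑' n : ℕ, (2:ℝ≥0∞)^(-(n:ℤ))) * W := ENNReal.tsum_mul_right
        _ = 2 * W := by rw [geom_two]
    calc S ≤ ∑' j : ℤ, (4 * N' * Q *
          ∑' n : ℕ, (2:ℝ≥0∞)^(-(n:ℤ)) * u (j - m - 1 - n))^2 := by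
          rw [hSS]
          refine ENNReal.tsum_le_tsum fun j => ?_
          exact pow_le_pow_left' (step2 j) 2
      _ = ∑' j : ℤ, 16 * N'^2 * Q^2 *
            (∑' n : ℕ, (2:ℝ≥0∞)^(-(n:ℤ)) * u (j - m - 1 - n))^2 := by
          apply tsum_congr; intro j; ring
      _ ≤ ∑' j : ℤ, 16 * N'^2 * Q^2 *
            (4 * ∑' n : ℕ, (2:ℝ≥0∞)^(-(n:ℤ)) * (u (j - m - 1 - n))^2) := by
          refine ENNReal.tsum_le_tsum fun j => ?_
          exact mul_le_mul_right (hVsq j) _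
      _ = 64 * N'^2 * Q^2 *
            ∑' j : ℤ, ∑' n : ℕ, (2:ℝ≥0∞)^(-(n:ℤ)) * (u (j - m - 1 - n))^2 := by
          rw [← ENNReal.tsum_mul_left]
          apply tsum_congr; intro j; ring
      _ = 64 * N'^2 * Q^2 * (2 * W) := by rw [hdouble]
      _ = 128 * N' * ((N' * Q^2) * W) := by ring
      _ ≤ 128 * N' * (1 * W) := by
          gcongr
      _ = 128 * N' * W := by ring
  -- final combination
  have hFint : (∫⁻ t in Set.Ioi (0:ℝ),
      (ENNReal.ofReal t * distFn F t)^2 * ENNReal.ofReal t⁻¹) ≤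
      4096 * N' * ∫⁻ t in Set.Ioi (0:ℝ),
        (ENNReal.ofReal t * distFn G t)^2 * ENNReal.ofReal t⁻¹ := by
    calc (∫⁻ t in Set.Ioi (0:ℝ),
        (ENNReal.ofReal t * distFn F t)^2 * ENNReal.ofReal t⁻¹)
        ≤ 4 * S := step_F F
      _ ≤ 4 * (128 * N' * W) := by gcongr
      _ ≤ 4 * (128 * N' * (8 * ∫⁻ t in Set.Ioi (0:ℝ),
            (ENNReal.ofReal t * distFn G t)^2 * ENNReal.ofReal t⁻¹)) := by
          gcongr
          exact step_G G hG0
      _ = 4096 * N' * ∫⁻ t in Set.Ioi (0:ℝ),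
            (ENNReal.ofReal t * distFn G t)^2 * ENNReal.ofReal t⁻¹ := by ring
  have h4096 : ((4096 : ℝ≥0∞) * N')^((1/2 : ℝ)) =
      64 * ENNReal.ofReal (N ^ ((1/2) : ℝ)) := by
    rw [ENNReal.mul_rpow_of_nonneg _ _ (by norm_num : (0:ℝ) ≤ 1/2)]
    congr 1
    · rw [show (4096:ℝ≥0∞) = (64:ℝ≥0∞)^(2:ℕ) by norm_num, ← ENNReal.rpow_natCast,
        ← ENNReal.rpow_mul]
      norm_num
    · rw [hN', ENNReal.ofReal_rpow_of_pos hN0]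
  calc L12Norm F
      = (∫⁻ t in Set.Ioi (0:ℝ),
          (ENNReal.ofReal t * distFn F t)^2 * ENNReal.ofReal t⁻¹)^((1/2 : ℝ)) := rfl
    _ ≤ ((4096 : ℝ≥0∞) * N' * ∫⁻ t in Set.Ioi (0:ℝ),
          (ENNReal.ofReal t * distFn G t)^2 * ENNReal.ofReal t⁻¹)^((1/2 : ℝ)) :=
        ENNReal.rpow_le_rpow hFint (by norm_num)
    _ = ((4096 : ℝ≥0∞) * N')^((1/2 : ℝ)) * L12Norm G := by
        rw [ENNReal.mul_rpow_of_nonneg _ _ (by norm_num : (0:ℝ) ≤ 1/2)]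
        rfl
    _ = (64 : ℝ≥0) * ENNReal.ofReal (N ^ ((1/2) : ℝ)) * L12Norm G := by
        rw [h4096]
        norm_num
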